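/- Let s and r be independent random variables, exponentially distributed with means Ω_S > 0 and Ω_R > 0 respectively, and let ρ > 0. Then E[1{r < ρ·s}·log₂(1+s)] = (1/ln 2)·[ e^{1/Ω_S}·E₁(1/Ω_S) − (Ω_R/(Ω_R+ρΩ_S))·exp((Ω_R+ρΩ_S)/(Ω_S·Ω_R))·E₁((Ω_R+ρΩ_S)/(Ω_S·Ω_R)) ]. -/

import Mathlib

open MeasureTheory ProbabilityTheory

/-- The exponential integral function `E₁(x) = ∫_x^∞ e^{-t}/t dt`. -/
noncomputable def expIntE1 (x : ℝ) : ℝ := ∫ t in Set.Ioi x, Real.exp (-t) / t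

/-- The law of an exponentially distributed random variable with mean `Ω`:
the measure on `ℝ` with density `(1/Ω) e^{-x/Ω}` on `[0,∞)` with respect to
Lebesgue measure. -/
noncomputable def expLaw (Ω : ℝ) : Measure ℝ :=
  (volume.restrict (Set.Ici (0 : ℝ))).withDensity
    (fun x => ENNReal.ofReal ((1 / Ω) * Real.exp (-x / Ω)))

section Aux
open Real Set Filter

lemma log_exp_integrable {l : ℝ} (hl : 0 < l) :
    IntegrableOn (fun s => Real.log (1+s) * Real.exp (-(l*s))) (Ioi 0) := by
  have hmaj : IntegrableOn (fun s => (2/l) * Real.exp (-(l/2) * s)) (Ioi 0) :=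
    (exp_neg_integrableOn_Ioi 0 (by positivity : (0:ℝ) < l/2)).const_mul (2/l)
  refine Integrable.mono hmaj ?_ ?_
  · exact ((Real.measurable_log.comp (measurable_const.add measurable_id)).mul
      ((measurable_id.const_mul l).neg.exp)).aestronglyMeasurable
  · rw [ae_restrict_iff' measurableSet_Ioi]
    filter_upwards with s hs
    have hs0 : (0:ℝ) < s := hs
    have h1 : 0 ≤ Real.log (1+s) := Real.log_nonneg (by linarith)
    have h2 : Real.log (1+s) ≤ s := by
      have := Real.log_le_sub_one_of_pos (by linarith : (0:ℝ) < 1+s)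
      linarith
    have h3 : s ≤ (2/l) * Real.exp (l/2 * s) := by
      have := Real.add_one_le_exp (l/2 * s)
      have hls : l/2 * s ≤ Real.exp (l/2*s) := by linarith
      calc s = (2/l) * (l/2 * s) := by field_simp
        _ ≤ (2/l) * Real.exp (l/2*s) := mul_le_mul_of_nonneg_left hls (by positivity)
    rw [Real.norm_eq_abs, Real.norm_eq_abs, abs_of_nonneg (mul_nonneg h1 (Real.exp_pos _).le),
      abs_of_nonneg (by positivity)]
    calc Real.log (1+s) * Real.exp (-(l*s))
        ≤ ((2/l) * Real.exp (l/2*s)) * Real.exp (-(l*s)) :=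
          mul_le_mul_of_nonneg_right (h2.trans h3) (Real.exp_pos _).le
      _ = (2/l) * Real.exp (-(l/2) * s) := by rw [mul_assoc, ← Real.exp_add]; ring_nf

lemma inv_exp_integrable {l : ℝ} (hl : 0 < l) :
    IntegrableOn (fun s => Real.exp (-(l*s)) / (1+s)) (Ioi 0) := by
  refine Integrable.mono (exp_neg_integrableOn_Ioi 0 hl) ?_ ?_
  · exact (((measurable_id.const_mul l).neg.exp).div
      (measurable_const.add measurable_id)).aestronglyMeasurable
  · rw [ae_restrict_iff' measurableSet_Ioi]
    filter_upwards with s hs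
    have hs0 : (0:ℝ) < s := hs
    rw [Real.norm_eq_abs, Real.norm_eq_abs, abs_of_nonneg (by positivity),
      abs_of_nonneg (Real.exp_pos _).le]
    rw [div_le_iff₀ (by linarith)]
    have h2 : Real.exp (-l * s) = Real.exp (-(l*s)) := by ring_nf
    rw [h2]
    nth_rewrite 1 [show Real.exp (-(l*s)) = Real.exp (-(l*s)) * 1 by ring]
    exact mul_le_mul_of_nonneg_left (by linarith) (Real.exp_pos _).le

lemma shift_Ioi (g : ℝ → ℝ) (a : ℝ) : ∫ u in Ioi (0:ℝ), g (u + a) = ∫ t in Ioi a, g t := by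
  rw [← integral_indicator measurableSet_Ioi, ← integral_indicator measurableSet_Ioi]
  rw [← integral_add_right_eq_self (fun t => (Ioi a).indicator g t) a]
  congr 1
  ext u
  by_cases h : 0 < u
  · simp only [indicator, mem_Ioi, h, if_true]
    rw [if_pos ((lt_add_iff_pos_left a).mpr h)]
  · simp only [indicator, mem_Ioi, h, if_false]
    rw [if_neg (by simpa using not_lt.mp h)]

lemma keyB {l : ℝ} (hl : 0 < l) :
    ∫ s in Ioi (0:ℝ), Real.exp (-(l*s)) / (1+s) = Real.exp l * expIntE1 l := by
  have hE : expIntE1 l = Real.exp (-l) * ∫ s in Ioi (0:ℝ), Real.exp (-(l*s)) / (1+s) := by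
    have h1 : expIntE1 l = ∫ u in Ioi (0:ℝ), Real.exp (-(u+l)) / (u+l) := by
      rw [expIntE1, ← shift_Ioi (fun t => Real.exp (-t) / t) l]
    have h2 := integral_comp_mul_left_Ioi (fun u => Real.exp (-(u+l)) / (u+l)) 0 hl
    rw [mul_zero] at h2
    have h3 : ∀ s ∈ Ioi (0:ℝ), Real.exp (-(l*s+l)) / (l*s+l)
        = (l⁻¹ * Real.exp (-l)) * (Real.exp (-(l*s)) / (1+s)) := by
      intro s hs
      have hs0 : (0:ℝ) < s := hs
      rw [show -(l*s+l) = -(l*s) + -l by ring, Real.exp_add]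
      field_simp
      ring
    have h4 : (∫ s in Ioi (0:ℝ), (fun u => Real.exp (-(u+l)) / (u+l)) (l * s))
        = l⁻¹ * Real.exp (-l) * ∫ s in Ioi (0:ℝ), Real.exp (-(l*s)) / (1+s) := by
      rw [setIntegral_congr_fun measurableSet_Ioi (fun s hs => h3 s hs), integral_const_mul]
    rw [h1]
    have h5 : l⁻¹ * (Real.exp (-l) * ∫ s in Ioi (0:ℝ), Real.exp (-(l*s)) / (1+s))
        = l⁻¹ * ∫ u in Ioi (0:ℝ), Real.exp (-(u+l)) / (u+l) := by
      rw [← mul_assoc, ← h4, h2, smul_eq_mul]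
    exact (mul_left_cancel₀ (inv_ne_zero hl.ne') h5).symm
  rw [hE, ← mul_assoc, ← Real.exp_add]
  simp

lemma log_exp_tendsto {l : ℝ} (hl : 0 < l) :
    Tendsto (fun s => Real.log (1+s) * Real.exp (-(l*s))) atTop (nhds 0) := by
  have hmaj := tendsto_rpow_mul_exp_neg_mul_atTop_nhds_zero 1 l hl
  simp only [Real.rpow_one] at hmaj
  apply squeeze_zero' ?_ ?_ hmaj
  · filter_upwards [eventually_ge_atTop (0:ℝ)] with s hs
    exact mul_nonneg (Real.log_nonneg (by linarith)) (Real.exp_pos _).le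
  · filter_upwards [eventually_ge_atTop (0:ℝ)] with s hs
    have h2 : Real.log (1+s) ≤ s := by
      have := Real.log_le_sub_one_of_pos (by linarith : (0:ℝ) < 1+s); linarith
    have h3 : Real.exp (-(l*s)) = Real.exp (-l*s) := by ring_nf
    rw [h3]
    exact mul_le_mul_of_nonneg_right h2 (Real.exp_pos _).le

lemma keyC {l : ℝ} (hl : 0 < l) :
    ∫ s in Ioi (0:ℝ), Real.log (1+s) * Real.exp (-(l*s))
      = (1/l) * Real.exp l * expIntE1 l := by
  set F : ℝ → ℝ := fun s => -(Real.log (1+s) * Real.exp (-(l*s))) with hF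
  set F' : ℝ → ℝ := fun s =>
    l * (Real.log (1+s) * Real.exp (-(l*s))) - Real.exp (-(l*s)) / (1+s) with hF'
  have hderiv : ∀ x ∈ Ici (0:ℝ), HasDerivAt F (F' x) x := by
    intro x hx
    have hx0 : (0:ℝ) ≤ x := hx
    have h1x : (0:ℝ) < 1 + x := by linarith
    have hlog : HasDerivAt (fun s : ℝ => Real.log (1+s)) (1/(1+x)) x := by
      have := (Real.hasDerivAt_log h1x.ne').comp x
        ((hasDerivAt_id x).const_add 1)
      have h2 : HasDerivAt (fun s : ℝ => Real.log (1+s)) ((1+x)⁻¹ * 1) x := this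
      simpa [one_div] using h2
    have hexp : HasDerivAt (fun s : ℝ => Real.exp (-(l*s))) (-l * Real.exp (-(l*x))) x := by
      have := (Real.hasDerivAt_exp (-(l*x))).comp x
        (((hasDerivAt_id x).const_mul l).neg)
      have h2 : HasDerivAt (fun s : ℝ => Real.exp (-(l*s))) (Real.exp (-(l*x)) * -(l*1)) x := this
      convert h2 using 1; ring
    have : HasDerivAt F (-(1/(1+x) * Real.exp (-(l*x)) + Real.log (1+x) * (-l * Real.exp (-(l*x))))) x :=
      (hlog.mul hexp).neg
    convert this using 1
    simp only [hF']
    ring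
  have hint1 := log_exp_integrable hl
  have hint2 := inv_exp_integrable hl
  have hf'int : IntegrableOn F' (Ioi 0) := ((hint1.const_mul l).sub hint2)
  have htend : Tendsto F atTop (nhds 0) := by
    rw [← neg_zero]; exact (log_exp_tendsto hl).neg
  have key := integral_Ioi_of_hasDerivAt_of_tendsto' hderiv hf'int htend
  have hF0 : F 0 = 0 := by simp [hF]
  rw [hF0, sub_zero] at key
  have hsplit : ∫ s in Ioi (0:ℝ), F' s
      = l * (∫ s in Ioi (0:ℝ), Real.log (1+s) * Real.exp (-(l*s)))
        - ∫ s in Ioi (0:ℝ), Real.exp (-(l*s)) / (1+s) := by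
    rw [hF']
    rw [integral_sub (hint1.const_mul l) hint2, integral_const_mul]
  rw [hsplit, keyB hl] at key
  rw [one_div, mul_assoc, eq_comm, inv_mul_eq_iff_eq_mul₀ hl.ne']
  linarith

lemma expLaw_ae_nonneg (Ω : ℝ) : ∀ᵐ x ∂(expLaw Ω), 0 ≤ x :=
  (withDensity_absolutelyContinuous _ _).ae_le (ae_restrict_mem measurableSet_Ici)

lemma dens_meas (Ω : ℝ) : Measurable (fun x => (1 / Ω) * Real.exp (-x / Ω)) :=
  ((measurable_id.neg.div_const Ω).exp).const_mul _

lemma expLaw_integral {Ω : ℝ} (hΩ : 0 < Ω) (g : ℝ → ℝ) :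
    ∫ x, g x ∂(expLaw Ω)
      = ∫ x in Ioi (0:ℝ), g x * ((1/Ω) * Real.exp (-x/Ω)) := by
  rw [expLaw]
  have h : (fun x => ENNReal.ofReal ((1 / Ω) * Real.exp (-x / Ω)))
      = fun x => ((fun x => ((1 / Ω) * Real.exp (-x / Ω)).toNNReal) x : ENNReal) := rfl
  rw [h, integral_withDensity_eq_integral_smul ((dens_meas Ω).real_toNNReal) g]
  rw [← integral_Ici_eq_integral_Ioi]
  congr 1
  ext x
  rw [NNReal.smul_def, smul_eq_mul, Real.coe_toNNReal _ (by positivity), mul_comm]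

lemma expLaw_integrable_iff {Ω : ℝ} (hΩ : 0 < Ω) {g : ℝ → ℝ} :
    Integrable g (expLaw Ω)
      ↔ IntegrableOn (fun x => g x * ((1/Ω) * Real.exp (-x/Ω))) (Ici 0) := by
  rw [expLaw, integrable_withDensity_iff ((dens_meas Ω).ennreal_ofReal)
    (ae_of_all _ fun x => ENNReal.ofReal_lt_top)]
  have heq : (fun x => g x * (ENNReal.ofReal ((1 / Ω) * Real.exp (-x / Ω))).toReal)
      = fun x => g x * ((1/Ω) * Real.exp (-x/Ω)) :=
    funext fun x => by rw [ENNReal.toReal_ofReal (by positivity)]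
  rw [heq]
  exact Iff.rfl

lemma exp_interval_int {Ω : ℝ} (hΩ : 0 < Ω) (t : ℝ) :
    ∫ x in (0:ℝ)..t, (1/Ω) * Real.exp (-x/Ω) = 1 - Real.exp (-t/Ω) := by
  have hderiv : ∀ x ∈ uIcc (0:ℝ) t,
      HasDerivAt (fun y => -Real.exp (-y/Ω)) ((1/Ω) * Real.exp (-x/Ω)) x := by
    intro x _
    have h1 : HasDerivAt (fun y : ℝ => -y/Ω) (-1/Ω) x := by
      simpa using ((hasDerivAt_id x).neg.div_const Ω)
    have := (Real.hasDerivAt_exp (-x/Ω)).comp x h1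
    have h2 : HasDerivAt (fun y => -Real.exp (-y/Ω)) (-(Real.exp (-x/Ω) * (-1/Ω))) x := this.neg
    convert h2 using 1
    ring
  have hint : IntervalIntegrable (fun x => (1/Ω) * Real.exp (-x/Ω)) volume 0 t :=
    (Continuous.intervalIntegrable (by continuity) 0 t)
  rw [intervalIntegral.integral_eq_sub_of_hasDerivAt hderiv hint]
  simp [Real.exp_zero]
  ring

lemma expLaw_Iio {Ω : ℝ} (hΩ : 0 < Ω) {t : ℝ} (ht : 0 ≤ t) :
    ((expLaw Ω) (Iio t)).toReal = 1 - Real.exp (-t/Ω) := by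
  rw [expLaw, withDensity_apply _ measurableSet_Iio,
    Measure.restrict_restrict measurableSet_Iio]
  have hIco : Iio t ∩ Ici (0:ℝ) = Ico 0 t := by
    ext x; simp [mem_Ico, mem_Iio, mem_Ici, and_comm]
  rw [hIco]
  have hcont : IntegrableOn (fun x => (1/Ω) * Real.exp (-x/Ω)) (Ico 0 t) :=
    ((Continuous.integrableOn_Icc (by continuity))).mono_set Ico_subset_Icc_self
  rw [← ofReal_integral_eq_lintegral_ofReal hcont
    (ae_of_all _ fun x => by positivity)]
  rw [ENNReal.toReal_ofReal (by
    apply integral_nonneg; intro x; positivity)]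
  rw [MeasureTheory.integral_Ico_eq_integral_Ioo, ← MeasureTheory.integral_Ioc_eq_integral_Ioo,
    ← intervalIntegral.integral_of_le ht]
  exact exp_interval_int hΩ t

lemma logb_exp_integrableOn_Ioi {l : ℝ} (hl : 0 < l) (c : ℝ) :
    IntegrableOn (fun x => Real.logb 2 (1+x) * (c * Real.exp (-(l*x)))) (Ioi 0) := by
  have h := (log_exp_integrable hl).const_mul (c / Real.log 2)
  exact h.congr (ae_of_all _ fun x => by simp only [Real.logb]; ring)

lemma final_calc {ΩS ΩR ρ : ℝ} (hΩS : 0 < ΩS) (hΩR : 0 < ΩR) (hρ : 0 < ρ) :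
    ∫ x in Ioi (0:ℝ),
        (Real.logb 2 (1+x) * (1 - Real.exp (-(ρ*x)/ΩR))) * ((1/ΩS) * Real.exp (-x/ΩS))
      = (1 / Real.log 2)
          * (Real.exp (1 / ΩS) * expIntE1 (1 / ΩS)
              - (ΩR / (ΩR + ρ * ΩS))
                  * Real.exp ((ΩR + ρ * ΩS) / (ΩS * ΩR))
                  * expIntE1 ((ΩR + ρ * ΩS) / (ΩS * ΩR))) := by
  set a : ℝ := 1/ΩS with ha
  set b : ℝ := (ΩR + ρ * ΩS) / (ΩS * ΩR) with hb
  have ha0 : 0 < a := by positivity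
  have hb0 : 0 < b := by positivity
  have hpt : ∀ x ∈ Ioi (0:ℝ),
      (Real.logb 2 (1+x) * (1 - Real.exp (-(ρ*x)/ΩR))) * ((1/ΩS) * Real.exp (-x/ΩS))
        = (1/(ΩS * Real.log 2)) * (Real.log (1+x) * Real.exp (-(a*x)))
          - (1/(ΩS * Real.log 2)) * (Real.log (1+x) * Real.exp (-(b*x))) := by
    intro x _
    have hexp : Real.exp (-(ρ*x)/ΩR) * Real.exp (-x/ΩS) = Real.exp (-(b*x)) := by
      rw [← Real.exp_add]
      congr 1
      rw [hb]
      field_simp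
      ring
    have hxa : Real.exp (-x/ΩS) = Real.exp (-(a*x)) := by
      congr 1; rw [ha]; field_simp
    simp only [Real.logb]
    rw [show (Real.log (1+x) / Real.log 2 * (1 - Real.exp (-(ρ*x)/ΩR)))
          * ((1/ΩS) * Real.exp (-x/ΩS))
        = (1/(ΩS * Real.log 2)) * (Real.log (1+x) * Real.exp (-x/ΩS))
          - (1/(ΩS * Real.log 2))
            * (Real.log (1+x) * (Real.exp (-(ρ*x)/ΩR) * Real.exp (-x/ΩS))) by ring]
    rw [hexp, hxa]
  rw [setIntegral_congr_fun measurableSet_Ioi hpt]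
  rw [integral_sub ((log_exp_integrable ha0).const_mul _)
      ((log_exp_integrable hb0).const_mul _),
    integral_const_mul, integral_const_mul, keyC ha0, keyC hb0]
  have hlog2 : Real.log 2 ≠ 0 := by
    have := Real.log_pos (by norm_num : (1:ℝ) < 2); linarith
  have h1 : (1/(ΩS * Real.log 2)) * ((1/a) * Real.exp a * expIntE1 a)
      = (1/Real.log 2) * (Real.exp a * expIntE1 a) := by
    rw [ha]; field_simp
  have h2 : (1/(ΩS * Real.log 2)) * ((1/b) * Real.exp b * expIntE1 b)
      = (1/Real.log 2) * ((ΩR / (ΩR + ρ * ΩS)) * Real.exp b * expIntE1 b) := by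
    have hbne : b ≠ 0 := hb0.ne'
    have hsum : (0:ℝ) < ΩR + ρ * ΩS := by positivity
    have hinv : (1/ΩS) * (1/b) = ΩR / (ΩR + ρ * ΩS) := by
      rw [hb]; field_simp
    calc (1/(ΩS * Real.log 2)) * ((1/b) * Real.exp b * expIntE1 b)
        = (1/Real.log 2) * (((1/ΩS) * (1/b)) * Real.exp b * expIntE1 b) := by
          ring
      _ = (1/Real.log 2) * ((ΩR / (ΩR + ρ * ΩS)) * Real.exp b * expIntE1 b) := by
          rw [hinv]
  rw [h1, h2]
  ring

end Aux

/-- For independent exponential SNRs `s`, `r` with means `Ω_S`, `Ω_R` and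
threshold `ρ > 0`, the average arrival rate into the relay's buffer is
`E[1{r < ρs} log₂(1+s)] = (1/ln 2)[e^{1/Ω_S} E₁(1/Ω_S)
− (Ω_R/(Ω_R+ρΩ_S)) e^{(Ω_R+ρΩ_S)/(Ω_SΩ_R)} E₁((Ω_R+ρΩ_S)/(Ω_SΩ_R))]`. -/
theorem arrival_rate_rayleigh
    {Ω : Type*} [MeasurableSpace Ω] (P : Measure Ω) [IsProbabilityMeasure P]
    (s r : Ω → ℝ) (hs : Measurable s) (hr : Measurable r)
    (ΩS ΩR : ℝ) (hΩS : 0 < ΩS) (hΩR : 0 < ΩR)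
    (hlaws : P.map s = expLaw ΩS) (hlawr : P.map r = expLaw ΩR)
    (hindep : IndepFun s r P) (ρ : ℝ) (hρ : 0 < ρ) :
    ∫ ω, (if r ω < ρ * s ω then Real.logb 2 (1 + s ω) else 0) ∂P
      = (1 / Real.log 2)
          * (Real.exp (1 / ΩS) * expIntE1 (1 / ΩS)
              - (ΩR / (ΩR + ρ * ΩS))
                  * Real.exp ((ΩR + ρ * ΩS) / (ΩS * ΩR))
                  * expIntE1 ((ΩR + ρ * ΩS) / (ΩS * ΩR))) := by
  classical
  have hμS : IsProbabilityMeasure (expLaw ΩS) := hlaws ▸ Measure.isProbabilityMeasure_map hs.aemeasurable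
  have hμR : IsProbabilityMeasure (expLaw ΩR) := hlawr ▸ Measure.isProbabilityMeasure_map hr.aemeasurable
  set g : ℝ × ℝ → ℝ := fun p => if p.2 < ρ * p.1 then Real.logb 2 (1 + p.1) else 0 with hgdef
  have hg : Measurable g := by
    apply Measurable.ite (measurableSet_lt measurable_snd (measurable_fst.const_mul ρ))
    · exact (Real.measurable_log.comp (measurable_const.add measurable_fst)).div_const _
    · exact measurable_const
  have hpair : Measurable (fun ω => (s ω, r ω)) := hs.prodMk hr
  have hjoint : P.map (fun ω => (s ω, r ω)) = (expLaw ΩS).prod (expLaw ΩR) := by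
    rw [(indepFun_iff_map_prod_eq_prod_map_map hs.aemeasurable hr.aemeasurable).mp hindep,
      hlaws, hlawr]
  have hstep1 : ∫ ω, (if r ω < ρ * s ω then Real.logb 2 (1 + s ω) else 0) ∂P
      = ∫ p, g p ∂((expLaw ΩS).prod (expLaw ΩR)) := by
    rw [← hjoint, integral_map hpair.aemeasurable hg.aestronglyMeasurable]
  have hgx : ∀ x : ℝ, (fun y => g (x, y))
      = (Set.Iio (ρ*x)).indicator (fun _ => Real.logb 2 (1+x)) := by
    intro x
    funext y
    simp only [hgdef, Set.indicator, Set.mem_Iio]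
  have hintlog : Integrable (fun x => Real.logb 2 (1 + x)) (expLaw ΩS) := by
    rw [expLaw_integrable_iff hΩS]
    rw [integrableOn_Ici_iff_integrableOn_Ioi]
    refine (logb_exp_integrableOn_Ioi (show (0:ℝ) < 1/ΩS by positivity) (1/ΩS)).congr
      (ae_of_all _ fun x => ?_)
    field_simp
  have hgint : Integrable g ((expLaw ΩS).prod (expLaw ΩR)) := by
    refine (integrable_prod_iff hg.aestronglyMeasurable).mpr ⟨?_, ?_⟩
    · refine ae_of_all _ fun x => ?_
      rw [hgx x]
      exact (integrable_const _).indicator measurableSet_Iio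
    · refine Integrable.mono hintlog.norm
        (hg.norm.aestronglyMeasurable.integral_prod_right') (ae_of_all _ fun x => ?_)
      have hineq : ∀ y : ℝ, ‖g (x, y)‖ ≤ ‖Real.logb 2 (1+x)‖ := by
        intro y
        simp only [hgdef]
        split_ifs
        · exact le_refl _
        · simp
      have hginty : Integrable (fun y => ‖g (x, y)‖) (expLaw ΩR) := by
        refine Integrable.norm ?_
        rw [hgx x]
        exact (integrable_const _).indicator measurableSet_Iio
      rw [Real.norm_eq_abs, abs_of_nonneg (integral_nonneg (fun y => norm_nonneg _))]
      calc ∫ y, ‖g (x, y)‖ ∂(expLaw ΩR)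
          ≤ ∫ _, ‖Real.logb 2 (1+x)‖ ∂(expLaw ΩR) :=
            integral_mono hginty (integrable_const _) hineq
        _ = ‖Real.logb 2 (1+x)‖ := by simp [measure_univ]
        _ ≤ ‖‖Real.logb 2 (1+x)‖‖ := by rw [norm_norm]
  have hstep2 : ∫ p, g p ∂((expLaw ΩS).prod (expLaw ΩR))
      = ∫ x, (∫ y, g (x, y) ∂(expLaw ΩR)) ∂(expLaw ΩS) := integral_prod g hgint
  set φ : ℝ → ℝ := fun x => Real.logb 2 (1+x) * (1 - Real.exp (-(ρ*x)/ΩR)) with hφ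
  have hinner : ∀ x : ℝ, 0 ≤ x → (∫ y, g (x, y) ∂(expLaw ΩR)) = φ x := by
    intro x hx
    rw [hgx x, integral_indicator_const _ measurableSet_Iio, measureReal_def,
      expLaw_Iio hΩR (by positivity : (0:ℝ) ≤ ρ*x), smul_eq_mul, hφ]
    ring
  have hstep3 : ∫ x, (∫ y, g (x, y) ∂(expLaw ΩR)) ∂(expLaw ΩS)
      = ∫ x, φ x ∂(expLaw ΩS) := by
    refine integral_congr_ae ?_
    filter_upwards [expLaw_ae_nonneg ΩS] with x hx
    exact hinner x hx
  rw [hstep1, hstep2, hstep3, expLaw_integral hΩS φ]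
  exact final_calc hΩS hΩR hρ
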